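/- Let H be a complex Hilbert space and let A, B be compact self-adjoint operators on H. If for every eigenspace X of A corresponding to a nonzero eigenvalue and every eigenspace Y of B corresponding to a nonzero eigenvalue the projections P_X and P_Y commute, then A and B commute. -/

import Mathlib

set_option maxHeartbeats 1000000

namespace Stmt17Aux
open ContinuousLinearMap Module.End Filter Topology
variable {H : Type*} [NormedAddCommGroup H] [InnerProductSpace ℂ H] [CompleteSpace H]
local notation "⟪" x ", " y "⟫" => @inner ℂ _ _ x y

lemma re_inner_symm (T : H →L[ℂ] H) (hT : IsSelfAdjoint T) (x y : H) :
    (⟪T x, y⟫).re = (⟪T y, x⟫).re := by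
  have h : ⟪T x, y⟫ = ⟪x, T y⟫ := hT.isSymmetric x y
  rw [h]
  rw [← inner_conj_symm x (T y)]
  exact Complex.conj_re _

lemma polarization_re (T : H →L[ℂ] H) (hT : IsSelfAdjoint T) (x y : H) :
    4 * (⟪T x, y⟫).re = (⟪T (x + y), x + y⟫).re - (⟪T (x - y), x - y⟫).re := by
  have h1 := re_inner_symm T hT x y
  simp only [map_add, map_sub, inner_add_left, inner_add_right, inner_sub_left, inner_sub_right,
    Complex.add_re, Complex.sub_re]
  linarith

lemma opNorm_le_of_forall_re (T : H →L[ℂ] H) (hT : IsSelfAdjoint T) {C : ℝ} (hC : 0 ≤ C)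
    (h : ∀ x : H, |(⟪T x, x⟫).re| ≤ C * ‖x‖ ^ 2) : ‖T‖ ≤ C := by
  refine T.opNorm_le_bound hC fun x => ?_
  rcases eq_or_ne (T x) 0 with h0 | h0
  · simp only [h0, norm_zero]
    positivity
  have hx : x ≠ 0 := by rintro rfl; simp at h0
  have hxpos : (0:ℝ) < ‖x‖ := norm_pos_iff.mpr hx
  have hTxpos : (0:ℝ) < ‖T x‖ := norm_pos_iff.mpr h0
  set y : H := (‖x‖ / ‖T x‖ : ℝ) • T x with hy
  have hny : ‖y‖ = ‖x‖ := by
    rw [hy, norm_smul]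
    rw [Real.norm_eq_abs, _root_.abs_of_nonneg (by positivity)]
    field_simp
  have hkey : 4 * (⟪T x, y⟫).re ≤ 4 * (C * (‖x‖ * ‖x‖)) := by
    rw [polarization_re T hT x y]
    have h1 := (abs_le.mp (h (x + y))).2
    have h2 := (abs_le.mp (h (x - y))).1
    have hpar := parallelogram_law_with_norm ℂ x y
    rw [sq] at h1 h2
    have expand : C * (‖x + y‖ * ‖x + y‖) + C * (‖x - y‖ * ‖x - y‖)
        = 4 * (C * (‖x‖ * ‖x‖)) := by
      rw [← mul_add]; linear_combination C * hpar + (2 * C * (‖y‖ + ‖x‖)) * hny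
    linarith
  have hTxy : (⟪T x, y⟫).re = ‖x‖ * ‖T x‖ := by
    rw [hy, RCLike.real_smul_eq_coe_smul (K := ℂ), inner_smul_right,
      inner_self_eq_norm_sq_to_K (𝕜 := ℂ) (T x)]
    rw [← RCLike.ofReal_pow, ← RCLike.ofReal_mul, ← RCLike.re_to_complex, RCLike.ofReal_re]
    field_simp
  have hfin : ‖x‖ * ‖T x‖ ≤ C * (‖x‖ * ‖x‖) := by rw [← hTxy]; linarith
  calc ‖T x‖ = (‖x‖ * ‖T x‖) / ‖x‖ := by field_simp
  _ ≤ (C * (‖x‖ * ‖x‖)) / ‖x‖ := by gcongr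
  _ = C * ‖x‖ := by field_simp

lemma exists_unit_vector (T : H →L[ℂ] H) (hT : IsSelfAdjoint T) (hT0 : T ≠ 0) {c : ℝ} (hc : c < ‖T‖) :
    ∃ x : H, ‖x‖ = 1 ∧ c < |(⟪T x, x⟫).re| := by
  by_contra hcon
  push_neg at hcon
  have hc0 : 0 ≤ c := by
    obtain ⟨x0, hx0⟩ : ∃ x0, T x0 ≠ 0 := by
      by_contra hall; push_neg at hall; exact hT0 (ContinuousLinearMap.ext fun x => by simp [hall])
    have hx0' : x0 ≠ 0 := fun h => hx0 (by simp [h])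
    have := hcon (‖x0‖⁻¹ • x0) (norm_smul_inv_norm hx0')
    exact le_trans (abs_nonneg _) this
  have hall : ∀ x : H, |(⟪T x, x⟫).re| ≤ c * ‖x‖ ^ 2 := by
    intro x
    rcases eq_or_ne x 0 with rfl | hx
    · simp
    · have hn : (0:ℝ) < ‖x‖ := norm_pos_iff.mpr hx
      have key := hcon (‖x‖⁻¹ • x) (norm_smul_inv_norm hx)
      have hsm : ((‖x‖⁻¹ : ℝ) : ℂ) • x = (‖x‖⁻¹ : ℝ) • x :=
        (RCLike.real_smul_eq_coe_smul (K := ℂ) _ _).symm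
      have expand : ⟪T ((‖x‖⁻¹ : ℝ) • x), (‖x‖⁻¹ : ℝ) • x⟫ = ((‖x‖⁻¹ ^ 2 : ℝ) : ℂ) * ⟪T x, x⟫ := by
        rw [← hsm, map_smul, inner_smul_left, inner_smul_right]
        simp only [map_inv₀, Complex.conj_ofReal]
        push_cast
        ring
      rw [expand] at key
      have : |(((‖x‖⁻¹ ^ 2 : ℝ) : ℂ) * ⟪T x, x⟫).re| = ‖x‖⁻¹ ^ 2 * |(⟪T x, x⟫).re| := by
        rw [Complex.re_ofReal_mul, abs_mul, _root_.abs_of_nonneg (by positivity : (0:ℝ) ≤ ‖x‖⁻¹ ^ 2)]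
      rw [this] at key
      have h2 : |(⟪T x, x⟫).re| ≤ c * ‖x‖ ^ 2 := by
        have hpos : (0:ℝ) < ‖x‖⁻¹ ^ 2 := by positivity
        calc |(⟪T x, x⟫).re| = (‖x‖⁻¹ ^ 2 * |(⟪T x, x⟫).re|) * ‖x‖ ^ 2 := by field_simp
        _ ≤ c * ‖x‖ ^ 2 := by nlinarith [sq_nonneg ‖x‖]
      exact h2
  exact absurd (opNorm_le_of_forall_re T hT hc0 hall) (not_le.mpr hc)

lemma exists_eigenvalue_ne_zero (T : H →L[ℂ] H) (hT : IsSelfAdjoint T)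
    (hc : IsCompactOperator (T : H → H)) (hT0 : T ≠ 0) :
    ∃ μ : ℂ, μ ≠ 0 ∧ Module.End.eigenspace (T : H →ₗ[ℂ] H) μ ≠ ⊥ := by
  have hr : (0:ℝ) < ‖T‖ := by
    rcases eq_or_lt_of_le (norm_nonneg T) with h | h
    · exact absurd (norm_eq_zero.mp h.symm) hT0
    · exact h
  -- choose unit vectors almost attaining the norm
  have hex : ∀ n : ℕ, ∃ x : H, ‖x‖ = 1 ∧ ‖T‖ - 1/(n+1) < |(⟪T x, x⟫).re| := by
    intro n
    exact exists_unit_vector T hT hT0 (by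
      have : (0:ℝ) < 1/(n+1) := by positivity
      linarith)
  choose x hx1 hx2 using hex
  set u : ℕ → ℝ := fun n => (⟪T (x n), x n⟫).re with hu
  have hub : ∀ n, |u n| ≤ ‖T‖ := by
    intro n
    calc |u n| ≤ ‖⟪T (x n), x n⟫‖ := Complex.abs_re_le_norm _
    _ ≤ ‖T (x n)‖ * ‖x n‖ := norm_inner_le_norm _ _
    _ ≤ ‖T‖ * ‖x n‖ * ‖x n‖ := by gcongr; exact T.le_opNorm _
    _ = ‖T‖ := by rw [hx1 n]; ring
  have hmem : ∀ n, u n ∈ Set.Icc (-‖T‖) ‖T‖ := fun n => abs_le.mp (hub n)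
  obtain ⟨lam, hlam, φ, hφ, hφt⟩ :=
    (isCompact_Icc (a := -‖T‖) (b := ‖T‖)).tendsto_subseq hmem
  -- |u (φ n)| → ‖T‖
  have habs : Filter.Tendsto (fun n => |u (φ n)|) Filter.atTop (nhds ‖T‖) := by
    have h1 : Filter.Tendsto (fun n : ℕ => ‖T‖ - 1/(φ n+1)) Filter.atTop (nhds ‖T‖) := by
      have : Filter.Tendsto (fun n : ℕ => 1/((φ n : ℝ)+1)) Filter.atTop (nhds 0) := by
        apply Filter.Tendsto.comp (f := fun n => (φ n : ℕ)) tendsto_one_div_add_atTop_nhds_zero_nat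
        exact hφ.tendsto_atTop
      simpa using (tendsto_const_nhds (x := ‖T‖)).sub this
    refine tendsto_of_tendsto_of_tendsto_of_le_of_le h1 tendsto_const_nhds ?_ ?_
    · exact fun n => (hx2 (φ n)).le
    · exact fun n => hub (φ n)
  have hlamabs : |lam| = ‖T‖ := by
    have : Filter.Tendsto (fun n => |u (φ n)|) Filter.atTop (nhds |lam|) := hφt.abs
    exact tendsto_nhds_unique this habs
  have hlam0 : lam ≠ 0 := fun h => by rw [h] at hlamabs; simp at hlamabs; linarith [hlamabs ▸ hr]
  set μ : ℂ := (lam : ℂ) with hμ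
  -- T x (φ n) - μ • x (φ n) → 0
  have hdiff : Filter.Tendsto (fun n => T (x (φ n)) - μ • x (φ n)) Filter.atTop (nhds 0) := by
    have hsq : ∀ n, ‖T (x (φ n)) - μ • x (φ n)‖^2 ≤ ‖T‖^2 + lam^2 - 2 * lam * u (φ n) := by
      intro n
      have hns := @norm_sub_sq ℂ _ _ _ _ (T (x (φ n))) (μ • x (φ n))
      have hre : RCLike.re ⟪T (x (φ n)), μ • x (φ n)⟫ = lam * u (φ n) := by
        rw [inner_smul_right]
        simp [hμ, Complex.re_ofReal_mul, hu]
      have hn1 : ‖μ • x (φ n)‖ = |lam| := by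
        rw [norm_smul, hx1]
        simp [hμ, Complex.norm_real]
      have hTn : ‖T (x (φ n))‖ ≤ ‖T‖ := by
        calc ‖T (x (φ n))‖ ≤ ‖T‖ * ‖x (φ n)‖ := T.le_opNorm _
        _ = ‖T‖ := by rw [hx1]; ring
      rw [hns, hre, hn1]
      have : |lam|^2 = lam^2 := sq_abs lam
      nlinarith [norm_nonneg (T (x (φ n)))]
    have hrhs : Filter.Tendsto (fun n => ‖T‖^2 + lam^2 - 2 * lam * u (φ n))
        Filter.atTop (nhds 0) := by
      have := ((tendsto_const_nhds (x := ‖T‖^2 + lam^2)).sub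
        ((tendsto_const_nhds (x := 2*lam)).mul hφt))
      have h2 : ‖T‖^2 + lam^2 - 2*(lam*lam) = 0 := by
        have : lam^2 = ‖T‖^2 := by rw [← sq_abs lam, hlamabs]
        nlinarith [this]
      rw [show (0:ℝ) = ‖T‖^2 + lam^2 - 2*(lam*lam) from by linarith]
      simpa [mul_assoc] using this
    have hsqt : Filter.Tendsto (fun n => ‖T (x (φ n)) - μ • x (φ n)‖^2)
        Filter.atTop (nhds 0) := by
      refine tendsto_of_tendsto_of_tendsto_of_le_of_le tendsto_const_nhds hrhs ?_ ?_
      · exact fun n => sq_nonneg _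
      · exact hsq
    have hnt : Filter.Tendsto (fun n => ‖T (x (φ n)) - μ • x (φ n)‖)
        Filter.atTop (nhds 0) := by
      have := hsqt.sqrt
      simpa [Real.sqrt_sq (norm_nonneg _)] using this
    exact tendsto_zero_iff_norm_tendsto_zero.mpr hnt
  -- compactness: extract convergent subsequence of T (x (φ n))
  obtain ⟨K, hK, hKsub⟩ := hc.image_closedBall_subset_compact 1
  have hmemK : ∀ n, T (x (φ n)) ∈ K := fun n =>
    hKsub ⟨x (φ n), by simp [Metric.mem_closedBall, hx1], rfl⟩
  obtain ⟨y, hyK, ψ, hψ, hψt⟩ := hK.tendsto_subseq hmemK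
  -- x (φ (ψ n)) converges to z := μ⁻¹ • y
  have hxt : Filter.Tendsto (fun n => x (φ (ψ n))) Filter.atTop (nhds (μ⁻¹ • y)) := by
    have hdiff' : Filter.Tendsto (fun n => T (x (φ (ψ n))) - μ • x (φ (ψ n))) Filter.atTop (nhds 0) :=
      hdiff.comp hψ.tendsto_atTop
    have hμx : Filter.Tendsto (fun n => μ • x (φ (ψ n))) Filter.atTop (nhds y) := by
      have := hψt.sub hdiff'
      simpa using this
    have hμ0 : μ ≠ 0 := by simpa [hμ] using hlam0
    have := hμx.const_smul μ⁻¹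
    simpa [smul_smul, inv_mul_cancel₀ hμ0] using this
  set z := μ⁻¹ • y with hz
  have hz1 : ‖z‖ = 1 := by
    have : Filter.Tendsto (fun n => ‖x (φ (ψ n))‖) Filter.atTop (nhds ‖z‖) := hxt.norm
    have h1 : Filter.Tendsto (fun n => ‖x (φ (ψ n))‖) Filter.atTop (nhds 1) := by
      simpa [hx1] using tendsto_const_nhds (x := (1:ℝ))
    exact tendsto_nhds_unique this h1
  have hTz : T z = μ • z := by
    have h1 : Filter.Tendsto (fun n => T (x (φ (ψ n)))) Filter.atTop (nhds (T z)) :=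
      (T.continuous.tendsto z).comp hxt
    have h2 : Filter.Tendsto (fun n => T (x (φ (ψ n)))) Filter.atTop (nhds y) := hψt
    have hy : T z = y := tendsto_nhds_unique h1 h2
    rw [hy, hz, smul_smul]
    have hμ0 : μ ≠ 0 := by simpa [hμ] using hlam0
    rw [mul_inv_cancel₀ hμ0, one_smul]
  refine ⟨μ, by simpa [hμ] using hlam0, ?_⟩
  intro hbot
  have hzmem : z ∈ Module.End.eigenspace (T : H →ₗ[ℂ] H) μ := by
    rw [Module.End.mem_eigenspace_iff]
    exact hTz
  rw [hbot] at hzmem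
  simp only [Submodule.mem_bot] at hzmem
  rw [hzmem] at hz1
  simp at hz1

lemma dense_iSup_eigenspaces (T : H →L[ℂ] H) (hT : IsSelfAdjoint T)
    (hc : IsCompactOperator (T : H → H)) :
    Dense ((↑(⨆ μ : ℂ, Module.End.eigenspace (T : H →ₗ[ℂ] H) μ) : Set H)) := by
  set K := ⨆ μ : ℂ, Module.End.eigenspace (T : H →ₗ[ℂ] H) μ with hK
  have hsymm : LinearMap.IsSymmetric (T : H →ₗ[ℂ] H) := hT.isSymmetric
  have hinv := hsymm.orthogonalComplement_iSup_eigenspaces_invariant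
  -- V := Kᗮ
  have hVbot : Kᗮ = ⊥ := by
    by_contra hne
    -- build the restricted operator
    set Tr : ↥Kᗮ →ₗ[ℂ] ↥Kᗮ := (T : H →ₗ[ℂ] H).restrict hinv with hTr
    have hcr : IsCompactOperator (Tr : ↥Kᗮ → ↥Kᗮ) := by
      exact IsCompactOperator.restrict' hc hinv
    have hcont : Continuous (Tr : ↥Kᗮ → ↥Kᗮ) := hcr.continuous (σ₁₂ := RingHom.id ℂ) (f := Tr)
    set Tc : ↥Kᗮ →L[ℂ] ↥Kᗮ := ⟨Tr, hcont⟩ with hTc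
    have hsa : IsSelfAdjoint Tc := by
      rw [ContinuousLinearMap.isSelfAdjoint_iff_isSymmetric]
      exact hsymm.restrict_invariant hinv
    have heig : ∀ μ : ℂ, Module.End.eigenspace (Tc : ↥Kᗮ →ₗ[ℂ] ↥Kᗮ) μ = ⊥ := by
      intro μ
      exact hsymm.orthogonalComplement_iSup_eigenspaces μ
    rcases eq_or_ne Tc 0 with h0 | h0
    · -- then eigenspace 0 = ⊤, contradiction with Kᗮ ≠ ⊥
      obtain ⟨v, hv⟩ := Submodule.exists_mem_ne_zero_of_ne_bot hne
      have : (⟨v, hv.1⟩ : ↥Kᗮ) ∈ Module.End.eigenspace (Tc : ↥Kᗮ →ₗ[ℂ] ↥Kᗮ) 0 := by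
        rw [Module.End.mem_eigenspace_iff, h0]
        simp
      rw [heig 0] at this
      simp only [Submodule.mem_bot] at this
      exact hv.2 (by simpa using congrArg Subtype.val this)
    · obtain ⟨μ, _, hμ⟩ := exists_eigenvalue_ne_zero Tc hsa hcr h0
      exact hμ (heig μ)
  have hclosure : K.topologicalClosure = ⊤ := by
    rw [← Submodule.orthogonal_orthogonal_eq_closure, hVbot, Submodule.bot_orthogonal_eq_top]
  exact Submodule.dense_iff_topologicalClosure_eq_top.mpr hclosure

lemma clm_eq_zero_of_dense (S : H →L[ℂ] H) (K : Submodule ℂ H) (hd : Dense (K : Set H))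
    (h : ∀ x ∈ K, S x = 0) : S = 0 := by
  ext x
  have heq : Set.EqOn (⇑S) (⇑(0 : H →L[ℂ] H)) (closure (K : Set H)) :=
    Set.EqOn.closure (fun y hy => by simpa using h y hy) S.continuous (map_continuous 0)
  have := heq (by rw [hd.closure_eq]; trivial : x ∈ closure (K : Set H))
  simpa using this

lemma vec_eq_zero_of_inner_dense (v : H) (K : Submodule ℂ H) (hd : Dense (K : Set H))
    (h : ∀ x ∈ K, ⟪v, x⟫ = 0) : v = 0 := by
  have heq : Set.EqOn (fun x => ⟪v, x⟫) (fun _ => (0:ℂ)) (closure (K : Set H)) :=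
    Set.EqOn.closure (fun y hy => h y hy) (continuous_const.inner continuous_id) continuous_const
  have := heq (by rw [hd.closure_eq]; trivial : v ∈ closure (K : Set H))
  simpa using inner_self_eq_zero.mp this

lemma skew_vanish (T : H →L[ℂ] H) (hT : IsSelfAdjoint T) (hcT : IsCompactOperator (T : H → H))
    (S : H →L[ℂ] H) (hskew : ContinuousLinearMap.adjoint S = -S)
    (h1 : ∀ β : ℂ, β ≠ 0 → ∀ y ∈ Module.End.eigenspace (T : H →ₗ[ℂ] H) β, S y = 0)
    (h0 : ∀ y ∈ Module.End.eigenspace (T : H →ₗ[ℂ] H) 0,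
          ∀ y' ∈ Module.End.eigenspace (T : H →ₗ[ℂ] H) 0, ⟪S y, y'⟫ = 0) :
    S = 0 := by
  have hd := dense_iSup_eigenspaces T hT hcT
  -- inner products between eigenvectors vanish
  have key : ∀ β : ℂ, ∀ y ∈ Module.End.eigenspace (T : H →ₗ[ℂ] H) β,
      ∀ β' : ℂ, ∀ y' ∈ Module.End.eigenspace (T : H →ₗ[ℂ] H) β', ⟪S y, y'⟫ = 0 := by
    intro β y hy β' y' hy'
    rcases eq_or_ne β 0 with rfl | hβ
    · rcases eq_or_ne β' 0 with rfl | hβ'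
      · exact h0 y hy y' hy'
      · calc ⟪S y, y'⟫ = ⟪y, ContinuousLinearMap.adjoint S y'⟫ :=
              (ContinuousLinearMap.adjoint_inner_right S y y').symm
        _ = 0 := by rw [hskew]; simp [ContinuousLinearMap.neg_apply, h1 β' hβ' y' hy']
    · rw [h1 β hβ y hy]; simp
  -- S vanishes on each eigenvector
  have step1 : ∀ β : ℂ, ∀ y ∈ Module.End.eigenspace (T : H →ₗ[ℂ] H) β, S y = 0 := by
    intro β y hy
    refine vec_eq_zero_of_inner_dense (S y) _ hd ?_
    intro x hx
    refine Submodule.iSup_induction (motive := fun z => ⟪S y, z⟫ = 0) _ hx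
      (fun β' y' hy' => key β y hy β' y' hy') (by simp) ?_
    intro a b ha hb
    rw [inner_add_right, ha, hb, add_zero]
  -- S vanishes on the iSup
  refine clm_eq_zero_of_dense S _ hd ?_
  intro x hx
  refine Submodule.iSup_induction (motive := fun z => S z = 0) _ hx
    (fun β y hy => step1 β y hy) (by simp) ?_
  intro a b ha hb
  rw [map_add, ha, hb, add_zero]

lemma isClosed_eigenspace (T : H →L[ℂ] H) (μ : ℂ) :
    IsClosed ((Module.End.eigenspace (T : H →ₗ[ℂ] H) μ : Submodule ℂ H) : Set H) := by
  have h : ((Module.End.eigenspace (T : H →ₗ[ℂ] H) μ : Submodule ℂ H) : Set H)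
      = {x | T x = μ • x} := by
    ext x; exact Module.End.mem_eigenspace_iff
  rw [h]
  exact isClosed_eq T.continuous (continuous_const.smul continuous_id)

noncomputable def eigenProj (T : H →L[ℂ] H) (μ : ℂ) : H →L[ℂ] H :=
  haveI : CompleteSpace (Module.End.eigenspace (T : H →ₗ[ℂ] H) μ) :=
    (isClosed_eigenspace T μ).completeSpace_coe
  (Module.End.eigenspace (T : H →ₗ[ℂ] H) μ).subtypeL ∘L
    Submodule.orthogonalProjectionOnto (Module.End.eigenspace (T : H →ₗ[ℂ] H) μ)

lemma eigenProj_apply_mem (T : H →L[ℂ] H) (μ : ℂ) (z : H) :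
    eigenProj T μ z ∈ Module.End.eigenspace (T : H →ₗ[ℂ] H) μ := by
  haveI : CompleteSpace (Module.End.eigenspace (T : H →ₗ[ℂ] H) μ) :=
    (isClosed_eigenspace T μ).completeSpace_coe
  exact (Submodule.orthogonalProjectionOnto (Module.End.eigenspace (T : H →ₗ[ℂ] H) μ) z).2

lemma eigenProj_apply_of_mem (T : H →L[ℂ] H) (μ : ℂ) {y : H}
    (hy : y ∈ Module.End.eigenspace (T : H →ₗ[ℂ] H) μ) : eigenProj T μ y = y := by
  haveI : CompleteSpace (Module.End.eigenspace (T : H →ₗ[ℂ] H) μ) :=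
    (isClosed_eigenspace T μ).completeSpace_coe
  have := Submodule.orthogonalProjectionOnto_mem_subspace_eq_self
    (K := Module.End.eigenspace (T : H →ₗ[ℂ] H) μ) ⟨y, hy⟩
  exact congrArg Subtype.val this

lemma eigenProj_isSelfAdjoint (T : H →L[ℂ] H) (μ : ℂ) : IsSelfAdjoint (eigenProj T μ) := by
  haveI : CompleteSpace (Module.End.eigenspace (T : H →ₗ[ℂ] H) μ) :=
    (isClosed_eigenspace T μ).completeSpace_coe
  exact isSelfAdjoint_starProjection (Module.End.eigenspace (T : H →ₗ[ℂ] H) μ)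

lemma eigenProj_isIdempotent (T : H →L[ℂ] H) (μ : ℂ) : IsIdempotentElem (eigenProj T μ) := by
  refine ContinuousLinearMap.ext fun z => ?_
  show eigenProj T μ (eigenProj T μ z) = eigenProj T μ z
  exact eigenProj_apply_of_mem T μ (eigenProj_apply_mem T μ z)

lemma eigenProj_range (T : H →L[ℂ] H) (μ : ℂ) :
    LinearMap.range (eigenProj T μ : H →ₗ[ℂ] H) = Module.End.eigenspace (T : H →ₗ[ℂ] H) μ := by
  ext z
  constructor
  · rintro ⟨w, rfl⟩
    exact eigenProj_apply_mem T μ w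
  · intro hz
    exact ⟨z, eigenProj_apply_of_mem T μ hz⟩

section Main
variable (A B : H →L[ℂ] H)

lemma proj_comm (hA : IsSelfAdjoint A) (hB : IsSelfAdjoint B)
    (hcB : IsCompactOperator (B : H → H))
    (hcomm : ∀ α β : ℂ, α ≠ 0 → β ≠ 0 →
      Module.End.HasEigenvalue (A : H →ₗ[ℂ] H) α →
      Module.End.HasEigenvalue (B : H →ₗ[ℂ] H) β →
      ∀ P Q : H →L[ℂ] H,
        IsSelfAdjoint P → IsIdempotentElem P →
        LinearMap.range (P : H →ₗ[ℂ] H) = Module.End.eigenspace (A : H →ₗ[ℂ] H) α →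
        IsSelfAdjoint Q → IsIdempotentElem Q →
        LinearMap.range (Q : H →ₗ[ℂ] H) = Module.End.eigenspace (B : H →ₗ[ℂ] H) β →
        P * Q = Q * P)
    {α : ℂ} (hα : α ≠ 0) (hev : Module.End.HasEigenvalue (A : H →ₗ[ℂ] H) α) :
    eigenProj A α * B = B * eigenProj A α := by
  set P := eigenProj A α with hP
  have hPsa := eigenProj_isSelfAdjoint A α
  have hskew : ContinuousLinearMap.adjoint (P * B - B * P) = -(P * B - B * P) := by
    rw [← ContinuousLinearMap.star_eq_adjoint, star_sub, star_mul, star_mul,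
      hPsa.star_eq, hB.star_eq, neg_sub]
  have h1 : ∀ β : ℂ, β ≠ 0 → ∀ y ∈ Module.End.eigenspace (B : H →ₗ[ℂ] H) β,
      (P * B - B * P) y = 0 := by
    intro β hβ y hy
    rcases eq_or_ne y 0 with rfl | hy0
    · simp
    have hevB : Module.End.HasEigenvalue (B : H →ₗ[ℂ] H) β :=
      Module.End.hasEigenvalue_iff.mpr (Submodule.ne_bot_iff _ |>.mpr ⟨y, hy, hy0⟩)
    set Q := eigenProj B β with hQ
    have hPQ : P * Q = Q * P :=
      hcomm α β hα hβ hev hevB P Q hPsa (eigenProj_isIdempotent A α) (eigenProj_range A α)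
        (eigenProj_isSelfAdjoint B β) (eigenProj_isIdempotent B β) (eigenProj_range B β)
    have hBy : B y = β • y := Module.End.mem_eigenspace_iff.mp hy
    have hPy : P y ∈ Module.End.eigenspace (B : H →ₗ[ℂ] H) β := by
      have h1 : P y = P (Q y) := by rw [eigenProj_apply_of_mem B β hy]
      have h2 : P (Q y) = Q (P y) := by
        have := congrArg (fun (f : H →L[ℂ] H) => f y) hPQ
        simpa [ContinuousLinearMap.mul_apply] using this
      rw [h1, h2]
      exact eigenProj_apply_mem B β _
    have hBPy : B (P y) = β • P y := Module.End.mem_eigenspace_iff.mp hPy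
    simp only [ContinuousLinearMap.sub_apply, ContinuousLinearMap.mul_apply]
    rw [hBy, hBPy, map_smul, sub_self]
  have h0 : ∀ y ∈ Module.End.eigenspace (B : H →ₗ[ℂ] H) 0,
      ∀ y' ∈ Module.End.eigenspace (B : H →ₗ[ℂ] H) 0, ⟪(P * B - B * P) y, y'⟫ = 0 := by
    intro y hy y' hy'
    have hBy : B y = 0 := by simpa using Module.End.mem_eigenspace_iff.mp hy
    have hBy' : B y' = 0 := by simpa using Module.End.mem_eigenspace_iff.mp hy'
    simp only [ContinuousLinearMap.sub_apply, ContinuousLinearMap.mul_apply]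
    rw [hBy, map_zero, inner_sub_left]
    have : ⟪B (P y), y'⟫ = ⟪P y, B y'⟫ := hB.isSymmetric (P y) y'
    rw [this, hBy']
    simp
  have := skew_vanish B hB hcB (P * B - B * P) hskew h1 h0
  rw [sub_eq_zero] at this
  exact this

theorem stmt17' (hA : IsSelfAdjoint A) (hB : IsSelfAdjoint B)
    (hcA : IsCompactOperator (A : H → H)) (hcB : IsCompactOperator (B : H → H))
    (hcomm : ∀ α β : ℂ, α ≠ 0 → β ≠ 0 →
      Module.End.HasEigenvalue (A : H →ₗ[ℂ] H) α →
      Module.End.HasEigenvalue (B : H →ₗ[ℂ] H) β →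
      ∀ P Q : H →L[ℂ] H,
        IsSelfAdjoint P → IsIdempotentElem P →
        LinearMap.range (P : H →ₗ[ℂ] H) = Module.End.eigenspace (A : H →ₗ[ℂ] H) α →
        IsSelfAdjoint Q → IsIdempotentElem Q →
        LinearMap.range (Q : H →ₗ[ℂ] H) = Module.End.eigenspace (B : H →ₗ[ℂ] H) β →
        P * Q = Q * P) :
    A * B = B * A := by
  have hskew : ContinuousLinearMap.adjoint (A * B - B * A) = -(A * B - B * A) := by
    rw [← ContinuousLinearMap.star_eq_adjoint, star_sub, star_mul, star_mul,
      hA.star_eq, hB.star_eq, neg_sub]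
  have h1 : ∀ α : ℂ, α ≠ 0 → ∀ x ∈ Module.End.eigenspace (A : H →ₗ[ℂ] H) α,
      (A * B - B * A) x = 0 := by
    intro α hα x hx
    rcases eq_or_ne x 0 with rfl | hx0
    · simp
    have hev : Module.End.HasEigenvalue (A : H →ₗ[ℂ] H) α :=
      Module.End.hasEigenvalue_iff.mpr (Submodule.ne_bot_iff _ |>.mpr ⟨x, hx, hx0⟩)
    have hPB := proj_comm A B hA hB hcB hcomm hα hev
    have hAx : A x = α • x := Module.End.mem_eigenspace_iff.mp hx
    have hBx : B x ∈ Module.End.eigenspace (A : H →ₗ[ℂ] H) α := by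
      have h1 : B x = B (eigenProj A α x) := by rw [eigenProj_apply_of_mem A α hx]
      have h2 : B (eigenProj A α x) = eigenProj A α (B x) := by
        have := congrArg (fun (f : H →L[ℂ] H) => f x) hPB
        simpa [ContinuousLinearMap.mul_apply] using this.symm
      rw [h1, h2]
      exact eigenProj_apply_mem A α _
    have hABx : A (B x) = α • B x := Module.End.mem_eigenspace_iff.mp hBx
    simp only [ContinuousLinearMap.sub_apply, ContinuousLinearMap.mul_apply]
    rw [hABx, hAx, map_smul, sub_self]
  have h0 : ∀ x ∈ Module.End.eigenspace (A : H →ₗ[ℂ] H) 0,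
      ∀ x' ∈ Module.End.eigenspace (A : H →ₗ[ℂ] H) 0, ⟪(A * B - B * A) x, x'⟫ = 0 := by
    intro x hx x' hx'
    have hAx : A x = 0 := by simpa using Module.End.mem_eigenspace_iff.mp hx
    have hAx' : A x' = 0 := by simpa using Module.End.mem_eigenspace_iff.mp hx'
    simp only [ContinuousLinearMap.sub_apply, ContinuousLinearMap.mul_apply]
    rw [hAx, map_zero, inner_sub_left]
    have : ⟪A (B x), x'⟫ = ⟪B x, A x'⟫ := hA.isSymmetric (B x) x'
    rw [this, hAx']
    simp
  have := skew_vanish A hA hcA (A * B - B * A) hskew h1 h0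
  rw [sub_eq_zero] at this
  exact this

end Main

end Stmt17Aux

theorem stmt17 {H : Type*} [NormedAddCommGroup H] [InnerProductSpace ℂ H] [CompleteSpace H]
    (A B : H →L[ℂ] H) (hA : IsSelfAdjoint A) (hB : IsSelfAdjoint B)
    (hcA : IsCompactOperator (A : H → H)) (hcB : IsCompactOperator (B : H → H))
    (hcomm : ∀ α β : ℂ, α ≠ 0 → β ≠ 0 →
      Module.End.HasEigenvalue (A : H →ₗ[ℂ] H) α →
      Module.End.HasEigenvalue (B : H →ₗ[ℂ] H) β →
      ∀ P Q : H →L[ℂ] H,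
        IsSelfAdjoint P → IsIdempotentElem P →
        LinearMap.range (P : H →ₗ[ℂ] H) = Module.End.eigenspace (A : H →ₗ[ℂ] H) α →
        IsSelfAdjoint Q → IsIdempotentElem Q →
        LinearMap.range (Q : H →ₗ[ℂ] H) = Module.End.eigenspace (B : H →ₗ[ℂ] H) β →
        P * Q = Q * P) :
    A * B = B * A :=
  Stmt17Aux.stmt17' A B hA hB hcA hcB hcomm
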